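/- Let z : ℤ → ℝ → ℝ be a family of differentiable functions satisfying for all n ∈ ℤ and t ∈ ℝ the equation ż_n = z_{n+1} z_n³ z_{n−1} (z_{n+2} z_{n+1} − z_{n−1} z_{n−2}). Define u_n(t) = z_{n+3}(t) z_{n+2}(t)² z_{n+1}(t)² z_n(t). Then for all n ∈ ℤ and t ∈ ℝ, u̇_n = u_n (u_{n+2} + u_{n+1} − u_{n−1} − u_{n−2}), i.e., u solves the INB equation. -/

import Mathlib

/-- Equation `żₙ = z_{n+1} zₙ³ z_{n−1}(z_{n+2} z_{n+1} − z_{n−1} z_{n−2})` is transformed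
into the INB equation by `uₙ = z_{n+3} z_{n+2}² z_{n+1}² zₙ`. -/
theorem stmt_12 (z : ℤ → ℝ → ℝ)
    (hz : ∀ (n : ℤ) (t : ℝ), HasDerivAt (z n)
      (z (n + 1) t * (z n t) ^ 3 * z (n - 1) t
        * (z (n + 2) t * z (n + 1) t - z (n - 1) t * z (n - 2) t)) t)
    (u : ℤ → ℝ → ℝ)
    (hu : ∀ (n : ℤ) (t : ℝ),
      u n t = z (n + 3) t * (z (n + 2) t) ^ 2 * (z (n + 1) t) ^ 2 * z n t) :
    ∀ (n : ℤ) (t : ℝ), HasDerivAt (u n)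
      (u n t * (u (n + 2) t + u (n + 1) t - u (n - 1) t - u (n - 2) t)) t := by
  intro n t
  have hfun : u n = fun t => z (n + 3) t * (z (n + 2) t) ^ 2 * (z (n + 1) t) ^ 2 * z n t :=
    funext fun t => hu n t
  rw [hfun]
  have H := (((hz (n + 3) t).mul ((hz (n + 2) t).pow 2)).mul ((hz (n + 1) t).pow 2)).mul
    (hz n t)
  convert H using 1
  · rfl
  · rfl
  · rfl
  simp only [hu, Pi.mul_apply, Pi.pow_apply,
    show n + 3 + 1 = n + 4 from by ring, show n + 3 + 2 = n + 5 from by ring,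
    show n + 3 - 1 = n + 2 from by ring, show n + 3 - 2 = n + 1 from by ring,
    show n + 2 + 1 = n + 3 from by ring, show n + 2 + 2 = n + 4 from by ring,
    show n + 2 - 1 = n + 1 from by ring, show n + 2 - 2 = n from by ring,
    show n + 1 + 1 = n + 2 from by ring, show n + 1 + 2 = n + 3 from by ring,
    show n + 1 - 1 = n from by ring, show n + 1 - 2 = n - 1 from by ring,
    show n + 2 + 3 = n + 5 from by ring, show n + 1 + 3 = n + 4 from by ring,
    show n - 1 + 3 = n + 2 from by ring, show n - 1 + 2 = n + 1 from by ring,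
    show n - 1 + 1 = n from by ring, show n - 2 + 3 = n + 1 from by ring,
    show n - 2 + 2 = n from by ring, show n - 2 + 1 = n - 1 from by ring]
  ring
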